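/- Let φ : ℝ → ℝ be C² and convex, g₁,...,g_m : ℝ → ℝ be C², convex and nonnegative, a, b ∈ ℝ, and P_m = {−1,1}^m. Then the function h(u) = Σ_{p ∈ P_m} φ(a + bu + Σ_{i=1}^m p_i g_i(u)) is convex. -/

import Mathlib

open Set

private lemma lemA (φ : ℝ → ℝ) (hφcx : ConvexOn ℝ univ φ) (c s₁ s₂ : ℝ)
    (h0 : 0 ≤ s₁) (h12 : s₁ ≤ s₂) :
    φ (c + s₁) + φ (c - s₁) ≤ φ (c + s₂) + φ (c - s₂) := by
  rcases eq_or_lt_of_le (h0.trans h12) with h | h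
  · have hs1 : s₁ = 0 := le_antisymm (h12.trans h.symm.le) h0
    simp [hs1, ← h]
  · set lam : ℝ := (s₂ + s₁) / (2 * s₂) with hlam
    set mu : ℝ := (s₂ - s₁) / (2 * s₂) with hmu
    have hlam0 : 0 ≤ lam := by positivity
    have hmu0 : 0 ≤ mu := by
      apply div_nonneg (by linarith) (by linarith)
    have hsum : lam + mu = 1 := by
      rw [hlam, hmu]; field_simp
      ring
    have h1 : φ (c + s₁) ≤ lam * φ (c + s₂) + mu * φ (c - s₂) := by
      have := hφcx.2 (mem_univ (c + s₂)) (mem_univ (c - s₂)) hlam0 hmu0 hsum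
      simp only [smul_eq_mul] at this
      have harg : lam * (c + s₂) + mu * (c - s₂) = c + s₁ := by
        rw [hlam, hmu]; field_simp
        ring
      rwa [harg] at this
    have h2 : φ (c - s₁) ≤ mu * φ (c + s₂) + lam * φ (c - s₂) := by
      have := hφcx.2 (mem_univ (c + s₂)) (mem_univ (c - s₂)) hmu0 hlam0
        (by linarith)
      simp only [smul_eq_mul] at this
      have harg : mu * (c + s₂) + lam * (c - s₂) = c - s₁ := by
        rw [hlam, hmu]; field_simp
        ring
      rwa [harg] at this
    calc φ (c + s₁) + φ (c - s₁)
        ≤ (lam * φ (c + s₂) + mu * φ (c - s₂)) +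
          (mu * φ (c + s₂) + lam * φ (c - s₂)) := add_le_add h1 h2
      _ = (lam + mu) * φ (c + s₂) + (lam + mu) * φ (c - s₂) := by ring
      _ = φ (c + s₂) + φ (c - s₂) := by rw [hsum]; ring

private lemma lemC (m : ℕ) (φ : ℝ → ℝ) (hφcx : ConvexOn ℝ univ φ) (t : ℝ)
    (x y : Fin m → ℝ) (j : Fin m) (hxy : ∀ i, i ≠ j → x i = y i)
    (h0 : 0 ≤ x j) (hj : x j ≤ y j) :
    ∑ p : Fin m → Bool, φ (t + ∑ i, (if p i then (1:ℝ) else -1) * x i)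
      ≤ ∑ p : Fin m → Bool, φ (t + ∑ i, (if p i then (1:ℝ) else -1) * y i) := by
  set σ : (Fin m → Bool) → (Fin m → Bool) := fun p => Function.update p j (!(p j)) with hσ
  have hinv : Function.Involutive σ := by
    intro p
    funext i
    by_cases hij : i = j
    · subst hij; simp [hσ, Function.update]
    · simp [hσ, Function.update, hij]
  set F : (Fin m → ℝ) → (Fin m → Bool) → ℝ :=
    fun z p => φ (t + ∑ i, (if p i then (1:ℝ) else -1) * z i) with hF
  -- decomposition of the argument
  have key : ∀ (z : Fin m → ℝ) (p : Fin m → Bool),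
      F z p = φ ((t + ∑ i ∈ Finset.univ.erase j, (if p i then (1:ℝ) else -1) * z i)
        + (if p j then (1:ℝ) else -1) * z j) ∧
      F z (σ p) = φ ((t + ∑ i ∈ Finset.univ.erase j, (if p i then (1:ℝ) else -1) * z i)
        - (if p j then (1:ℝ) else -1) * z j) := by
    intro z p
    have hsplit : ∀ q : Fin m → Bool,
        (∑ i, (if q i then (1:ℝ) else -1) * z i)
          = (∑ i ∈ Finset.univ.erase j, (if q i then (1:ℝ) else -1) * z i)
            + (if q j then (1:ℝ) else -1) * z j := by
      intro q
      rw [Finset.sum_erase_add _ _ (Finset.mem_univ j)]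
    constructor
    · rw [hF]; simp only []; rw [hsplit p]; congr 1; ring
    · rw [hF]; simp only []; rw [hsplit (σ p)]
      have h1 : ∑ i ∈ Finset.univ.erase j, (if (σ p) i then (1:ℝ) else -1) * z i
          = ∑ i ∈ Finset.univ.erase j, (if p i then (1:ℝ) else -1) * z i := by
        apply Finset.sum_congr rfl
        intro i hi
        have : i ≠ j := Finset.ne_of_mem_erase hi
        simp [hσ, Function.update, this]
      have h2 : (if (σ p) j then (1:ℝ) else -1) = -(if p j then (1:ℝ) else -1) := by
        simp only [hσ, Function.update_self]
        cases p j <;> simp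
      rw [h1, h2]; congr 1; ring
  -- pairwise inequality
  have pair : ∀ p : Fin m → Bool, F x p + F x (σ p) ≤ F y p + F y (σ p) := by
    intro p
    obtain ⟨hx1, hx2⟩ := key x p
    obtain ⟨hy1, hy2⟩ := key y p
    have herase : ∑ i ∈ Finset.univ.erase j, (if p i then (1:ℝ) else -1) * x i
        = ∑ i ∈ Finset.univ.erase j, (if p i then (1:ℝ) else -1) * y i := by
      apply Finset.sum_congr rfl
      intro i hi
      rw [hxy i (Finset.ne_of_mem_erase hi)]
    set c := t + ∑ i ∈ Finset.univ.erase j, (if p i then (1:ℝ) else -1) * x i with hc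
    rw [hx1, hx2, hy1, hy2, ← herase, ← hc]
    cases hpj : p j
    · simp only [hpj, Bool.false_eq_true, if_false]
      have := lemA φ hφcx c (x j) (y j) h0 hj
      have e1 : c + -1 * x j = c - x j := by ring
      have e2 : c - -1 * x j = c + x j := by ring
      have e3 : c + -1 * y j = c - y j := by ring
      have e4 : c - -1 * y j = c + y j := by ring
      rw [e1, e2, e3, e4]
      linarith [this]
    · simp only [hpj, if_true]
      have := lemA φ hφcx c (x j) (y j) h0 hj
      have e1 : c + 1 * x j = c + x j := by ring
      have e2 : c - 1 * x j = c - x j := by ring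
      have e3 : c + 1 * y j = c + y j := by ring
      have e4 : c - 1 * y j = c - y j := by ring
      rw [e1, e2, e3, e4]
      linarith [this]
  -- sum over the involution
  have hbij : Function.Bijective σ := hinv.bijective
  have hsum_comp : ∀ z : Fin m → ℝ, ∑ p : Fin m → Bool, F z (σ p) = ∑ p : Fin m → Bool, F z p :=
    fun z => Fintype.sum_bijective σ hbij _ _ (fun p => rfl)
  have hdouble : ∑ p : Fin m → Bool, (F x p + F x (σ p)) ≤ ∑ p : Fin m → Bool, (F y p + F y (σ p)) :=
    Finset.sum_le_sum (fun p _ => pair p)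
  rw [Finset.sum_add_distrib, Finset.sum_add_distrib, hsum_comp x, hsum_comp y] at hdouble
  linarith [hdouble]

private lemma lemB (m : ℕ) (φ : ℝ → ℝ) (hφcx : ConvexOn ℝ univ φ) (t : ℝ)
    (x y : Fin m → ℝ) (h0 : ∀ i, 0 ≤ x i) (hxy : ∀ i, x i ≤ y i) :
    ∑ p : Fin m → Bool, φ (t + ∑ i, (if p i then (1:ℝ) else -1) * x i)
      ≤ ∑ p : Fin m → Bool, φ (t + ∑ i, (if p i then (1:ℝ) else -1) * y i) := by
  have aux : ∀ S : Finset (Fin m), ∀ y : Fin m → ℝ, (∀ i, x i ≤ y i) →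
      (∀ i, i ∉ S → x i = y i) →
      ∑ p : Fin m → Bool, φ (t + ∑ i, (if p i then (1:ℝ) else -1) * x i)
        ≤ ∑ p : Fin m → Bool, φ (t + ∑ i, (if p i then (1:ℝ) else -1) * y i) := by
    intro S
    induction S using Finset.induction_on with
    | empty =>
      intro y _ heq
      have : x = y := funext fun i => heq i (Finset.notMem_empty i)
      rw [this]
    | @insert j s hjs ih =>
      intro y hle heq
      set y' : Fin m → ℝ := Function.update y j (x j) with hy'
      have step1 : ∑ p : Fin m → Bool, φ (t + ∑ i, (if p i then (1:ℝ) else -1) * x i)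
          ≤ ∑ p : Fin m → Bool, φ (t + ∑ i, (if p i then (1:ℝ) else -1) * y' i) := by
        apply ih
        · intro i
          rw [hy', Function.update_apply]
          split
          · next h => rw [h]
          · exact hle i
        · intro i his
          rw [hy', Function.update_apply]
          split
          · next h => rw [h]
          · next h => exact heq i (by simp [h, his])
      have step2 : ∑ p : Fin m → Bool, φ (t + ∑ i, (if p i then (1:ℝ) else -1) * y' i)
          ≤ ∑ p : Fin m → Bool, φ (t + ∑ i, (if p i then (1:ℝ) else -1) * y i) := by
        apply lemC m φ hφcx t y' y j
        · intro i hij; rw [hy', Function.update_apply, if_neg hij]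
        · rw [hy', Function.update_self]; exact h0 j
        · rw [hy', Function.update_self]; exact hle j
      exact step1.trans step2
  exact aux Finset.univ y hxy (fun i hi => absurd (Finset.mem_univ i) hi)

/-- if `φ : ℝ → ℝ` is `C²` and convex, `g₁, …, g_m : ℝ → ℝ` are `C²`, convex
and nonnegative, and `a, b ∈ ℝ`, then
`h(u) = Σ_{p ∈ {-1,1}^m} φ(a + b·u + Σ_i p_i g_i(u))` is convex. -/
theorem stmt10 (m : ℕ) (φ : ℝ → ℝ) (g : Fin m → ℝ → ℝ) (a b : ℝ)
    (hφ : ContDiff ℝ 2 φ) (hφcx : ConvexOn ℝ univ φ)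
    (hg : ∀ i, ContDiff ℝ 2 (g i)) (hgcx : ∀ i, ConvexOn ℝ univ (g i))
    (hgnn : ∀ i u, 0 ≤ g i u) :
    ConvexOn ℝ univ (fun u =>
      ∑ p : Fin m → Bool,
        φ (a + b * u + ∑ i, (if p i then (1:ℝ) else -1) * g i u)) := by
  refine ⟨convex_univ, ?_⟩
  intro u _ v _ α β hα hβ hαβ
  simp only [smul_eq_mul]
  set w := α * u + β * v with hw
  -- step 1: monotonicity
  have step1 : ∑ p : Fin m → Bool,
      φ (a + b * w + ∑ i, (if p i then (1:ℝ) else -1) * g i w)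
      ≤ ∑ p : Fin m → Bool,
      φ (a + b * w + ∑ i, (if p i then (1:ℝ) else -1) * (α * g i u + β * g i v)) := by
    apply lemB m φ hφcx (a + b * w) (fun i => g i w)
      (fun i => α * g i u + β * g i v) (fun i => hgnn i w)
    intro i
    have := (hgcx i).2 (mem_univ u) (mem_univ v) hα hβ hαβ
    simpa [smul_eq_mul, hw] using this
  -- step 2: rewrite the argument as a convex combination
  have argeq : ∀ p : Fin m → Bool,
      a + b * w + ∑ i, (if p i then (1:ℝ) else -1) * (α * g i u + β * g i v)
        = α * (a + b * u + ∑ i, (if p i then (1:ℝ) else -1) * g i u)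
          + β * (a + b * v + ∑ i, (if p i then (1:ℝ) else -1) * g i v) := by
    intro p
    have hsplit : ∑ i, (if p i then (1:ℝ) else -1) * (α * g i u + β * g i v)
        = α * (∑ i, (if p i then (1:ℝ) else -1) * g i u)
          + β * (∑ i, (if p i then (1:ℝ) else -1) * g i v) := by
      rw [Finset.mul_sum, Finset.mul_sum, ← Finset.sum_add_distrib]
      apply Finset.sum_congr rfl
      intro i _
      ring
    rw [hsplit, hw]
    have hβ' : β = 1 - α := by linarith
    rw [hβ']
    ring
  -- step 3: convexity of φ
  have step3 : ∑ p : Fin m → Bool,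
      φ (a + b * w + ∑ i, (if p i then (1:ℝ) else -1) * (α * g i u + β * g i v))
      ≤ α * (∑ p : Fin m → Bool,
          φ (a + b * u + ∑ i, (if p i then (1:ℝ) else -1) * g i u))
        + β * (∑ p : Fin m → Bool,
          φ (a + b * v + ∑ i, (if p i then (1:ℝ) else -1) * g i v)) := by
    rw [Finset.mul_sum, Finset.mul_sum, ← Finset.sum_add_distrib]
    apply Finset.sum_le_sum
    intro p _
    rw [argeq p]
    have := hφcx.2 (mem_univ (a + b * u + ∑ i, (if p i then (1:ℝ) else -1) * g i u))
      (mem_univ (a + b * v + ∑ i, (if p i then (1:ℝ) else -1) * g i v)) hα hβ hαβ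
    simpa [smul_eq_mul] using this
  calc ∑ p : Fin m → Bool, φ (a + b * w + ∑ i, (if p i then (1:ℝ) else -1) * g i w)
      ≤ _ := step1
    _ ≤ _ := step3
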